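/- If A and B are alternal moulds in the v_i variables (in ARI-bar), then arit(B)·A is alternal, where for v-moulds (amit(B)·A)(w)=Σ_{w=abc, b,c≠∅} A(ac)B(b⌋) and (anit(B)·A)(w)=Σ_{w=abc, a,b≠∅} A(ac)B(⌊b), and arit(B)·A = amit(B)·A - anit(B)·A. -/

import Mathlib

open List

variable {K : Type*} [Field K] [CharZero K]

/-- The multiset (as a list, with multiplicity) of shuffles of two words. -/
def shuffles {α : Type*} : List α → List α → List (List α)
  | [], v => [v]
  | u, [] => [u]
  | x :: u, y :: v =>
      ((shuffles u (y :: v)).map (x :: ·)) ++ ((shuffles (x :: u) v).map (y :: ·))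
  termination_by u v => u.length + v.length

/-- A mould (at the level of evaluations) is alternal if all its shuffle sums over
pairs of nonempty words vanish. -/
def Alternal (A : List K → K) : Prop :=
  ∀ u v : List K, u ≠ [] → v ≠ [] → ((shuffles u v).map A).sum = 0

/-- mould multiplication `mu`. -/
def mu (A B : List K → K) : List K → K :=
  fun w => ∑ k ∈ Finset.range (w.length + 1), A (w.take k) * B (w.drop k)

/-- `lu(A,B) = mu(A,B) - mu(B,A)`. -/
def lu (A B : List K → K) : List K → K :=
  fun w => mu A B w - mu B A w

/-- All decompositions of a word into two consecutive subwords. -/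
def splits2 {α : Type*} (w : List α) : List (List α × List α) :=
  (List.range (w.length + 1)).map fun k => (w.take k, w.drop k)

/-- All decompositions of a word into three consecutive subwords. -/
def splits3 {α : Type*} (w : List α) : List (List α × List α × List α) :=
  (splits2 w).flatMap fun p => (splits2 p.2).map fun q => (p.1, q.1, q.2)

/-- Add `s` to the first letter of a word. -/
def addFirst (s : K) : List K → List K
  | [] => []
  | x :: xs => (x + s) :: xs

/-- Add `s` to the last letter of a word. -/
def addLast (s : K) : List K → List K
  | [] => []
  | [x] => [x + s]
  | x :: xs => x :: addLast s xs

/-- `amit` for u-moulds: `(amit(B)·A)(w) = Σ_{w=abc, b,c≠∅} A(a⌈c) B(b)`. -/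
def amitU (B A : List K → K) : List K → K := fun w =>
  ((splits3 w).map fun p =>
    match p with
    | (_, [], _) => 0
    | (_, _, []) => 0
    | (a, b, c) => A (a ++ addFirst b.sum c) * B b).sum

/-- `anit` for u-moulds: `(anit(B)·A)(w) = Σ_{w=abc, a,b≠∅} A(a⌉c) B(b)`. -/
def anitU (B A : List K → K) : List K → K := fun w =>
  ((splits3 w).map fun p =>
    match p with
    | ([], _, _) => 0
    | (_, [], _) => 0
    | (a, b, c) => A (addLast b.sum a ++ c) * B b).sum

/-- `arit(B)·A = amit(B)·A - anit(B)·A` on u-moulds. -/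
def aritU (B A : List K → K) : List K → K :=
  fun w => amitU B A w - anitU B A w

/-- the ari bracket on u-moulds. -/
def ariU (A B : List K → K) : List K → K :=
  fun w => aritU B A w + lu A B w - aritU A B w

/-- `amit` for v-moulds. -/
def amitV (B A : List K → K) : List K → K := fun w =>
  ((splits3 w).map fun p =>
    match p with
    | (_, [], _) => 0
    | (_, _, []) => 0
    | (a, b, c0 :: c') => A (a ++ c0 :: c') * B (b.map (fun x => x - c0))).sum

/-- `anit` for v-moulds. -/
def anitV (B A : List K → K) : List K → K := fun w =>
  ((splits3 w).map fun p =>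
    match p with
    | ([], _, _) => 0
    | (_, [], _) => 0
    | (a, b, c) => A (a ++ c) * B (b.map (fun x => x - a.getLastD 0))).sum

/-- `arit(B)·A = amit(B)·A - anit(B)·A` on v-moulds. -/
def aritV (B A : List K → K) : List K → K :=
  fun w => amitV B A w - anitV B A w

/-- the ari bracket on v-moulds. -/
def ariV (A B : List K → K) : List K → K :=
  fun w => aritV B A w + lu A B w - aritV A B w

/-- `neg(A)(u_1,...,u_r) = A(-u_1,...,-u_r)`. -/
def negM (A : List K → K) : List K → K := fun w => A (w.map fun x => -x)

/-- `push(A)(u_1,...,u_r) = A(-u_1-⋯-u_r, u_1, ..., u_{r-1})`. -/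
def pushM (A : List K → K) : List K → K := fun w =>
  match w with
  | [] => A []
  | _ :: _ => A ((-w.sum) :: w.dropLast)

/-- `mantar(A)(u_1,...,u_r) = (-1)^{r-1} A(u_r,...,u_1)`. -/
def mantarM (A : List K → K) : List K → K :=
  fun w => (-1 : K) ^ (w.length + 1) * A w.reverse

/-- argument list for swap from u-moulds to v-moulds:
`(v_1,...,v_r) ↦ (v_r, v_{r-1}-v_r, ..., v_1-v_2)`. -/
def swapUargs (w : List K) : List K :=
  List.zipWith (· - ·) w.reverse (0 :: w.reverse)

/-- argument list for swap from v-moulds to u-moulds: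
`(u_1,...,u_r) ↦ (u_1+⋯+u_r, u_1+⋯+u_{r-1}, ..., u_1)`. -/
def swapVargs (w : List K) : List K :=
  (List.range w.length).map fun i => (w.take (w.length - i)).sum

/-- swap, sending a u-mould to a v-mould. -/
def swapUV (A : List K → K) : List K → K := fun w => A (swapUargs w)

/-- swap, sending a v-mould to a u-mould. -/
def swapVU (A : List K → K) : List K → K := fun w => A (swapVargs w)

/-- A constant-valued mould: its value depends only on the depth. -/
def IsConstantMould (C : List K → K) : Prop :=
  ∀ w w' : List K, w.length = w'.length → C w = C w'


set_option maxHeartbeats 1000000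
set_option linter.unusedSectionVars false
set_option linter.unusedVariables false

section LSsec
variable {α : Type*} {β : Type*} {M : Type*} [AddCommMonoid M]

def LS (l : List α) (f : α → M) : M := (l.map f).sum

@[simp] lemma LS_nil (f : α → M) : LS ([] : List α) f = 0 := rfl
@[simp] lemma LS_cons (x : α) (l : List α) (f : α → M) : LS (x::l) f = f x + LS l f := by
  simp [LS]
@[simp] lemma LS_singleton (x : α) (f : α → M) : LS [x] f = f x := by simp [LS]
lemma LS_append (l₁ l₂ : List α) (f : α → M) : LS (l₁ ++ l₂) f = LS l₁ f + LS l₂ f := by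
  simp [LS]
lemma LS_map (g : α → β) (l : List α) (f : β → M) :
    LS (l.map g) f = LS l (fun x => f (g x)) := by simp [LS, Function.comp_def]
lemma LS_congr {l : List α} {f g : α → M} (h : ∀ x ∈ l, f x = g x) : LS l f = LS l g := by
  unfold LS; rw [List.map_congr_left h]
@[simp] lemma LS_zero (l : List α) : LS l (fun _ => (0:M)) = 0 := by simp [LS]
lemma LS_add (l : List α) (f g : α → M) :
    LS l (fun x => f x + g x) = LS l f + LS l g := by
  induction l with
  | nil => simp
  | cons x t ih => simp [ih]; abel
lemma LS_comm (l : List α) (m : List β) (f : α → β → M) :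
    LS l (fun x => LS m (f x)) = LS m (fun y => LS l (fun x => f x y)) := by
  induction l with
  | nil => simp
  | cons x t ih => simp [ih, LS_add]
lemma LS_sub {N : Type*} [AddCommGroup N] (l : List α) (f g : α → N) :
    LS l (fun x => f x - g x) = LS l f - LS l g := by
  induction l with
  | nil => simp
  | cons x t ih => simp [ih]; abel
lemma LS_mul_right {R : Type*} [NonUnitalNonAssocSemiring R] (l : List α) (f : α → R) (c : R) :
    LS l (fun x => f x * c) = (LS l f) * c := by
  induction l with
  | nil => simp
  | cons x t ih => simp [ih, add_mul]
lemma LS_flatMap (l : List α) (g : α → List β) (f : β → M) :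
    LS (l.flatMap g) f = LS l (fun x => LS (g x) f) := by
  induction l with
  | nil => simp
  | cons x t ih => simp [List.flatMap_cons, LS_append, ih]

@[simp] lemma shuffles_nil_left (v : List α) : shuffles ([] : List α) v = [v] := by
  simp [shuffles]
@[simp] lemma shuffles_nil_right (u : List α) : shuffles u ([] : List α) = [u] := by
  cases u <;> simp [shuffles]
lemma shuffles_cons_cons (x y : α) (u v : List α) :
    shuffles (x::u) (y::v) =
      ((shuffles u (y :: v)).map (x :: ·)) ++ ((shuffles (x :: u) v).map (y :: ·)) := by
  rw [shuffles]
lemma LS_shuffles_cons_cons (x y : α) (u v : List α) (f : List α → M) :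
    LS (shuffles (x::u) (y::v)) f
      = LS (shuffles u (y::v)) (fun w => f (x::w))
        + LS (shuffles (x::u) v) (fun w => f (y::w)) := by
  rw [shuffles_cons_cons, LS_append, LS_map, LS_map]

@[simp] lemma splits2_nil : splits2 ([] : List α) = [([], [])] := by simp [splits2]
lemma splits2_cons (x : α) (w : List α) :
    splits2 (x::w) = ([], x::w) :: (splits2 w).map (fun p => (x::p.1, p.2)) := by
  simp only [splits2, length_cons, List.range_succ_eq_map, List.map_cons, List.map_map]
  simp [Function.comp]
lemma LS_splits2_cons (x : α) (w : List α) (f : List α × List α → M) :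
    LS (splits2 (x::w)) f = f ([], x::w) + LS (splits2 w) (fun p => f (x::p.1, p.2)) := by
  rw [splits2_cons, LS_cons, LS_map]
lemma LS_splits2_first_nil [DecidableEq α] (w : List α) (h : List α → M) :
    LS (splits2 w) (fun q => if q.1 = [] then h q.2 else 0) = h w := by
  cases w with
  | nil => simp
  | cons x w' =>
    rw [LS_splits2_cons]
    simp

lemma shuffles_map (g : α → β) : ∀ (u v : List α),
    shuffles (u.map g) (v.map g) = (shuffles u v).map (List.map g)
  | [], v => by simp
  | x::u, [] => by simp
  | x::u, y::v => by
    rw [List.map_cons, List.map_cons, shuffles_cons_cons, shuffles_cons_cons]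
    rw [← (List.map_cons : List.map g (y :: v) = g y :: List.map g v),
      ← (List.map_cons : List.map g (x :: u) = g x :: List.map g u)]
    rw [shuffles_map g u (y::v), shuffles_map g (x::u) v]
    simp [Function.comp_def]
  termination_by u v => u.length + v.length

lemma LS_shuffles_comm (f : List α → M) : ∀ (u v : List α),
    LS (shuffles u v) f = LS (shuffles v u) f
  | [], v => by cases v <;> simp
  | x::u, [] => by simp
  | x::u, y::v => by
    rw [LS_shuffles_cons_cons, LS_shuffles_cons_cons]
    rw [LS_shuffles_comm (fun w => f (x :: w)) u (y::v),
        LS_shuffles_comm (fun w => f (y :: w)) (x::u) v]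
    exact add_comm _ _
  termination_by u v => u.length + v.length

end LSsec

variable {α : Type*} {M : Type*} [AddCommMonoid M]

theorem key1 : ∀ (u : List α), ∀ (v : List α), ∀ (F : List α → List α → M),
    LS (shuffles u v) (fun w => LS (splits2 w) (fun p => F p.1 p.2)) =
    LS (splits2 u) (fun p => LS (splits2 v) (fun q =>
      LS (shuffles p.1 q.1) (fun a => LS (shuffles p.2 q.2) (fun c => F a c)))) := by
  intro u
  induction u with
  | nil =>
    intro v F
    simp
  | cons x u' ihu =>
    intro v
    induction v with
    | nil =>
      intro F
      simp
    | cons y v' ihv =>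
      intro F
      have hx := ihu (y::v') (fun a c => F (x::a) c)
      have hy := ihv (fun a c => F (y::a) c)
      -- normalize LHS
      rw [LS_shuffles_cons_cons]
      simp only [LS_splits2_cons, LS_add, LS_singleton]
      rw [hx, hy]
      simp only [LS_splits2_cons, LS_shuffles_cons_cons, LS_add, LS_singleton,
        shuffles_nil_left, shuffles_nil_right]
      abel

variable {α : Type*} {M : Type*} [AddCommMonoid M]

theorem lemU (u₂ : List α) (x : α) : ∀ (u₁ : List α) (v : List α) (H : List α → M),
    LS (splits2 v) (fun q => LS (shuffles u₁ q.1) (fun a =>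
      LS (shuffles u₂ q.2) (fun c => H (a ++ x :: c)))) =
    LS (shuffles (u₁ ++ x :: u₂) v) H := by
  intro u₁
  induction u₁ with
  | nil =>
    intro v
    induction v with
    | nil => intro H; simp
    | cons y v' ihv =>
      intro H
      have hy := ihv (fun w => H (y::w))
      simp only [LS_splits2_cons, LS_shuffles_cons_cons, LS_add, LS_singleton,
        shuffles_nil_left, shuffles_nil_right, nil_append, cons_append] at hy ⊢
      rw [← hy]
  | cons x₁ u₁' ihu =>
    intro v
    induction v with
    | nil => intro H; simp
    | cons y v' ihv =>
      intro H
      have hx := ihu (y::v') (fun w => H (x₁::w))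
      have hy := ihv (fun w => H (y::w))
      simp only [LS_splits2_cons, LS_shuffles_cons_cons, LS_add, LS_singleton,
        shuffles_nil_left, shuffles_nil_right, nil_append, cons_append] at hx hy ⊢
      rw [← hx, ← hy]
      abel

variable {α : Type*} {M : Type*} [AddCommMonoid M]

theorem tlem (x y : α) : ∀ (u : List α) (v : List α) (f : List α → M),
    LS (shuffles (u ++ [x]) (v ++ [y])) f =
      LS (shuffles u (v ++ [y])) (fun a => f (a ++ [x])) +
      LS (shuffles (u ++ [x]) v) (fun a => f (a ++ [y])) := by
  intro u
  induction u with
  | nil =>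
    intro v
    induction v with
    | nil =>
      intro f
      simp only [nil_append, LS_shuffles_cons_cons, shuffles_nil_left, shuffles_nil_right,
        LS_singleton, cons_append]
      exact add_comm _ _
    | cons z v' ihv =>
      intro f
      have hz := ihv (fun w => f (z::w))
      simp only [nil_append, cons_append, LS_shuffles_cons_cons, shuffles_nil_left,
        shuffles_nil_right, LS_singleton, append_assoc] at hz ⊢
      rw [hz]
      abel
  | cons x₁ u' ihu =>
    intro v
    induction v with
    | nil =>
      intro f
      have hx := ihu [] (fun w => f (x₁::w))
      simp only [nil_append, cons_append, LS_shuffles_cons_cons, shuffles_nil_left,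
        shuffles_nil_right, LS_singleton, append_assoc] at hx ⊢
      rw [hx]
      abel
    | cons z v' ihv =>
      intro f
      have hx := ihu (z::v') (fun w => f (x₁::w))
      have hz := ihv (fun w => f (z::w))
      simp only [nil_append, cons_append, LS_shuffles_cons_cons, shuffles_nil_left,
        shuffles_nil_right, LS_singleton, append_assoc] at hx hz ⊢
      rw [hx, hz]
      abel

section HD
variable {α : Type*} {M : Type*} [AddCommMonoid M]

theorem hd (f : List α → M) (u v : List α) :
    LS (shuffles u v) f =
      (match u with | [] => 0 | x::u' => LS (shuffles u' v) (fun c => f (x::c)))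
      + (match v with | [] => 0 | y::v' => LS (shuffles u v') (fun c => f (y::c)))
      + (match u, v with | [], [] => f [] | _, _ => 0) := by
  cases u <;> cases v <;> simp [LS_shuffles_cons_cons]

theorem LS_splits2_range (w : List α) (f : List α × List α → M) :
    LS (splits2 w) f = LS (List.range (w.length+1)) (fun k => f (w.take k, w.drop k)) := by
  unfold splits2; rw [LS_map]

theorem LS_range_succ_last (n : ℕ) (f : ℕ → M) :
    LS (List.range (n+1)) f = LS (List.range n) f + f n := by
  rw [List.range_succ, LS_append, LS_singleton]

theorem LS_range_succ_zero (n : ℕ) (f : ℕ → M) :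
    LS (List.range (n+1)) f = f 0 + LS (List.range n) (fun k => f (k+1)) := by
  rw [List.range_succ_eq_map, LS_cons, LS_map]

end HD


def mMatch (A : List K → K) (β : K → K) (a c : List K) : K :=
  match c with
  | [] => 0
  | c0 :: c' => A (a ++ c0 :: c') * β c0

def nMatch (A : List K → K) (β : K → K) (a c : List K) : K :=
  match a with
  | [] => 0
  | _ => A (a ++ c) * β (a.getLastD 0)

@[simp] lemma mMatch_nil (A : List K → K) (β : K → K) (a : List K) : mMatch A β a [] = 0 := rfl
@[simp] lemma mMatch_cons (A : List K → K) (β : K → K) (a c' : List K) (c0 : K) :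
    mMatch A β a (c0::c') = A (a ++ c0 :: c') * β c0 := rfl
@[simp] lemma nMatch_nil (A : List K → K) (β : K → K) (c : List K) : nMatch A β [] c = 0 := rfl
lemma nMatch_ne (A : List K → K) (β : K → K) {a : List K} (h : a ≠ []) (c : List K) :
    nMatch A β a c = A (a ++ c) * β (a.getLastD 0) := by
  cases a with
  | nil => exact absurd rfl h
  | cons z a' => rfl
lemma nMatch_concat (A : List K → K) (β : K → K) (a' : List K) (x : K) (c : List K) :
    nMatch A β (a' ++ [x]) c = A (a' ++ x :: c) * β x := by
  rw [nMatch_ne A β (by simp) c, getLastD_concat, append_assoc, singleton_append]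

/-- the common `v`-tail part of `SM` and `SN`. -/
def gTail (A : List K → K) (β : K → K) (u₁ u₃ v : List K) (k : ℕ) : K :=
  (LS (shuffles u₁ (v.take k)) fun a =>
    LS (shuffles u₃ (v.drop (k+1))) fun c => A (a ++ (v.getD k 0) :: c)) * β (v.getD k 0)

theorem SMdecomp (A : List K → K) (β : K → K) (u₁ u₃ v : List K) :
    LS (splits2 v) (fun q => LS (shuffles u₁ q.1) fun a =>
        LS (shuffles u₃ q.2) fun c => mMatch A β a c)
    = (match u₃ with | [] => (0:K) | x::u₃' => LS (shuffles (u₁ ++ x :: u₃') v) A * β x)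
      + LS (List.range v.length) (gTail A β u₁ u₃ v) := by
  cases u₃ with
  | nil =>
    simp only [shuffles_nil_left, LS_singleton]
    rw [LS_splits2_range]
    rw [show v.length + 1 = v.length + 1 from rfl, LS_range_succ_last]
    simp only [drop_length, mMatch_nil, LS_zero, add_zero]
    rw [zero_add]
    apply LS_congr
    intro k hk
    rw [mem_range] at hk
    have hd' : v.drop k = v[k] :: v.drop (k+1) := drop_eq_getElem_cons hk
    have hgd : v.getD k 0 = v[k] := getD_eq_getElem v 0 hk
    rw [hd']
    simp only [mMatch_cons, gTail, hgd, shuffles_nil_left, LS_singleton, LS_mul_right]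
  | cons x u₃' =>
    have step : ∀ q : List K × List K,
        (LS (shuffles u₁ q.1) fun a => LS (shuffles (x::u₃') q.2) fun c => mMatch A β a c)
        = (LS (shuffles u₁ q.1) fun a => LS (shuffles u₃' q.2) fun c => A (a ++ x :: c)) * β x
          + (LS (shuffles u₁ q.1) fun a => match q.2 with
              | [] => 0
              | y :: d => LS (shuffles (x::u₃') d) fun c => mMatch A β a (y::c)) := by
      intro q
      rw [← LS_mul_right, ← LS_add]
      apply LS_congr
      intro a _
      rw [hd (fun c => mMatch A β a c) (x::u₃') q.2]
      cases q.2 with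
      | nil => simp [LS_mul_right]
      | cons y d => simp [LS_mul_right]
    calc LS (splits2 v) (fun q => LS (shuffles u₁ q.1) fun a =>
            LS (shuffles (x::u₃') q.2) fun c => mMatch A β a c)
        = LS (splits2 v) (fun q =>
            (LS (shuffles u₁ q.1) fun a => LS (shuffles u₃' q.2) fun c => A (a ++ x :: c)) * β x)
          + LS (splits2 v) (fun q => LS (shuffles u₁ q.1) fun a => match q.2 with
              | [] => 0
              | y :: d => LS (shuffles (x::u₃') d) fun c => mMatch A β a (y::c)) := by
          rw [← LS_add]; exact LS_congr (fun q _ => step q)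
      _ = LS (shuffles (u₁ ++ x :: u₃') v) A * β x
          + LS (List.range v.length) (gTail A β u₁ (x::u₃') v) := by
          congr 1
          · rw [LS_mul_right, lemU u₃' x u₁ v A]
          · rw [LS_splits2_range, LS_range_succ_last]
            simp only [drop_length, LS_zero, add_zero]
            apply LS_congr
            intro k hk
            rw [mem_range] at hk
            have hd' : v.drop k = v[k] :: v.drop (k+1) := drop_eq_getElem_cons hk
            have hgd : v.getD k 0 = v[k] := getD_eq_getElem v 0 hk
            rw [hd']
            simp only [mMatch_cons, gTail, hgd, LS_mul_right]

theorem SNdecomp_nil (A : List K → K) (β : K → K) (u₃ v : List K) :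
    LS (splits2 v) (fun q => LS (shuffles ([] : List K) q.1) fun a =>
        LS (shuffles u₃ q.2) fun c => nMatch A β a c)
    = LS (List.range v.length) (gTail A β [] u₃ v) := by
  simp only [shuffles_nil_left, LS_singleton]
  rw [LS_splits2_range, LS_range_succ_zero]
  simp only [take_zero, nMatch_nil, LS_zero, zero_add]
  apply LS_congr
  intro k hk
  rw [mem_range] at hk
  have ht : v.take (k+1) = v.take k ++ [v[k]] := by rw [take_succ, getElem?_eq_getElem hk]; rfl
  have hgd : v.getD k 0 = v[k] := getD_eq_getElem v 0 hk
  rw [ht]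
  unfold gTail
  rw [hgd, ← LS_mul_right]
  simp only [shuffles_nil_left, LS_singleton]
  rw [← LS_mul_right]
  apply LS_congr
  intro c _
  rw [nMatch_concat]

theorem SNdecomp_concat (A : List K → K) (β : K → K) (u₁'' : List K) (x : K) (u₃ v : List K) :
    LS (splits2 v) (fun q => LS (shuffles (u₁'' ++ [x]) q.1) fun a =>
        LS (shuffles u₃ q.2) fun c => nMatch A β a c)
    = LS (shuffles (u₁'' ++ x :: u₃) v) A * β x
      + LS (List.range v.length) (gTail A β (u₁'' ++ [x]) u₃ v) := by
  have hU := lemU u₃ x u₁'' v A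
  rw [LS_splits2_range] at hU
  dsimp only at hU
  rw [LS_splits2_range, LS_range_succ_zero]
  have hsplit : ∀ k ∈ List.range v.length,
      (LS (shuffles (u₁'' ++ [x]) (v.take (k+1))) fun a =>
        LS (shuffles u₃ (v.drop (k+1))) fun c => nMatch A β a c)
      = (LS (shuffles u₁'' (v.take (k+1))) fun a' =>
          LS (shuffles u₃ (v.drop (k+1))) fun c => A (a' ++ x :: c) * β x)
        + gTail A β (u₁'' ++ [x]) u₃ v k := by
    intro k hk
    rw [mem_range] at hk
    have ht : v.take (k+1) = v.take k ++ [v[k]] := by rw [take_succ, getElem?_eq_getElem hk]; rfl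
    have hgd : v.getD k 0 = v[k] := getD_eq_getElem v 0 hk
    rw [ht, tlem x (v[k]) u₁'' (v.take k)]
    congr 1
    · rw [← ht]
      apply LS_congr
      intro a' _
      apply LS_congr
      intro c _
      rw [nMatch_concat]
    · unfold gTail
      rw [hgd, ← LS_mul_right]
      apply LS_congr
      intro a' _
      rw [← LS_mul_right]
      apply LS_congr
      intro c _
      rw [nMatch_concat]
  rw [LS_congr hsplit, LS_add]
  have claim1 : (LS (shuffles (u₁'' ++ [x]) (v.take 0)) fun a =>
        LS (shuffles u₃ (v.drop 0)) fun c => nMatch A β a c)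
      + (LS (List.range v.length) fun k => LS (shuffles u₁'' (v.take (k+1))) fun a' =>
          LS (shuffles u₃ (v.drop (k+1))) fun c => A (a' ++ x :: c) * β x)
      = LS (List.range (v.length + 1)) (fun k => LS (shuffles u₁'' (v.take k)) fun a' =>
          LS (shuffles u₃ (v.drop k)) fun c => A (a' ++ x :: c) * β x) := by
    rw [LS_range_succ_zero]
    congr 1
    simp only [take_zero, drop_zero, shuffles_nil_right, LS_singleton]
    apply LS_congr
    intro c _
    rw [nMatch_concat]
  rw [← add_assoc, claim1]
  congr 1
  simp only [LS_mul_right]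
  rw [hU]

def phiM (A B : List K → K) (t : List K × List K × List K) : K :=
  match t with
  | (_, [], _) => 0
  | (_, _, []) => 0
  | (a, b, c0 :: c') => A (a ++ c0 :: c') * B (b.map (fun x => x - c0))

def phiN (A B : List K → K) (t : List K × List K × List K) : K :=
  match t with
  | ([], _, _) => 0
  | (_, [], _) => 0
  | (a, b, c) => A (a ++ c) * B (b.map (fun x => x - a.getLastD 0))

theorem SMdecomp_nil' (A : List K → K) (β : K → K) (u₁ v : List K) :
    LS (splits2 v) (fun q => LS (shuffles u₁ q.1) fun a =>
        LS (shuffles ([] : List K) q.2) fun c => mMatch A β a c)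
    = LS (List.range v.length) (gTail A β u₁ [] v) := by
  have := SMdecomp A β u₁ [] v
  simpa using this

theorem SMdecomp_cons (A : List K → K) (β : K → K) (u₁ u₃' v : List K) (x : K) :
    LS (splits2 v) (fun q => LS (shuffles u₁ q.1) fun a =>
        LS (shuffles (x :: u₃') q.2) fun c => mMatch A β a c)
    = LS (shuffles (u₁ ++ x :: u₃') v) A * β x
      + LS (List.range v.length) (gTail A β u₁ (x :: u₃') v) :=
  SMdecomp A β u₁ (x :: u₃') v

theorem S0 (A B : List K → K) (hA : Alternal A) (b u₁ u₃ v : List K) (hv : v ≠ []) :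
    LS (splits2 v) (fun q => LS (shuffles u₁ q.1) fun a => LS (shuffles u₃ q.2) fun c =>
      phiM A B (a, b, c) - phiN A B (a, b, c)) = 0 := by
  cases b with
  | nil =>
    have hz : ∀ a c : List K, phiM A B (a, [], c) - phiN A B (a, [], c) = 0 := by
      intro a c
      cases a <;> cases c <;> simp [phiM, phiN]
    simp only [hz, LS_zero]
  | cons b0 b' =>
    set β : K → K := fun t => B ((b0::b').map (fun z => z - t)) with hβ
    have hm : ∀ (a c : List K), phiM A B (a, b0::b', c) = mMatch A β a c := by
      intro a c; cases c <;> simp [phiM, mMatch, hβ]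
    have hn : ∀ (a c : List K), phiN A B (a, b0::b', c) = nMatch A β a c := by
      intro a c; cases a <;> simp [phiN, nMatch, hβ]
    have hre : LS (splits2 v) (fun q => LS (shuffles u₁ q.1) fun a =>
          LS (shuffles u₃ q.2) fun c => phiM A B (a, b0::b', c) - phiN A B (a, b0::b', c))
        = LS (splits2 v) (fun q => LS (shuffles u₁ q.1) fun a =>
            LS (shuffles u₃ q.2) fun c => mMatch A β a c)
          - LS (splits2 v) (fun q => LS (shuffles u₁ q.1) fun a =>
              LS (shuffles u₃ q.2) fun c => nMatch A β a c) := by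
      rw [← LS_sub]
      apply LS_congr
      intro q _
      rw [← LS_sub]
      apply LS_congr
      intro a _
      rw [← LS_sub]
      apply LS_congr
      intro c _
      rw [hm, hn]
    rw [hre]
    cases u₃ with
    | nil =>
      rw [SMdecomp_nil']
      rcases eq_nil_or_concat u₁ with h1 | ⟨u₁'', x, h1⟩
      · subst h1
        rw [SNdecomp_nil]
        ring
      · rw [concat_eq_append] at h1
        subst h1
        rw [SNdecomp_concat]
        have h1 : LS (shuffles (u₁'' ++ x :: ([] : List K)) v) A = 0 := hA _ v (by simp) hv
        rw [h1]
        ring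
    | cons x3 u₃' =>
      rw [SMdecomp_cons]
      rcases eq_nil_or_concat u₁ with h1 | ⟨u₁'', x, h1⟩
      · subst h1
        rw [SNdecomp_nil]
        have h0 : LS (shuffles (([] : List K) ++ x3 :: u₃') v) A = 0 := hA _ v (by simp) hv
        rw [h0]
        ring
      · rw [concat_eq_append] at h1
        subst h1
        rw [SNdecomp_concat]
        have h1 : LS (shuffles (u₁'' ++ x :: (x3 :: u₃')) v) A = 0 := hA _ v (by simp) hv
        have h2 : LS (shuffles ((u₁'' ++ [x]) ++ x3 :: u₃') v) A = 0 := hA _ v (by simp) hv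
        rw [h1, h2]
        ring

section moreLS
variable {α : Type*} {M : Type*} [AddCommMonoid M]

lemma LS_splits3 (w : List α) (f : List α × List α × List α → M) :
    LS (splits3 w) f = LS (splits2 w) (fun p => LS (splits2 p.2) fun q => f (p.1, q.1, q.2)) := by
  unfold splits3
  rw [LS_flatMap]
  apply LS_congr
  intro p _
  rw [LS_map]

lemma LS_ite {c : Prop} [Decidable c] (l : List α) (f : α → M) :
    LS l (fun x => if c then f x else 0) = if c then LS l f else 0 := by
  by_cases h : c <;> simp [h]

lemma LS_mul_left {R : Type*} [NonUnitalNonAssocSemiring R] (l : List α) (f : α → R) (c : R) :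
    LS l (fun x => c * f x) = c * (LS l f) := by
  induction l with
  | nil => simp
  | cons x t ih => simp [ih, mul_add]

end moreLS

lemma sumB (B : List K → K) (hB : Alternal B) (g : K → K) (m1 m2 : List K)
    (h1 : m1 ≠ []) (h2 : m2 ≠ []) : LS (shuffles m1 m2) (fun b => B (b.map g)) = 0 := by
  have e1 : LS (shuffles m1 m2) (fun b => B (b.map g))
      = LS ((shuffles m1 m2).map (List.map g)) B := (LS_map (List.map g) _ B).symm
  rw [e1, ← shuffles_map]
  exact hB _ _ (by simpa using h1) (by simpa using h2)

lemma phi_zero_mid (A B : List K → K) (a c : List K) :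
    phiM A B (a, [], c) - phiN A B (a, [], c) = 0 := by
  cases a <;> cases c <;> simp [phiM, phiN]

theorem gate (A B : List K → K) (hB : Alternal B) (hB0 : B [] = 0)
    (w1 w2 m1 m2 t1 t2 : List K) [Decidable (m1 = [])] [Decidable (m2 = [])] :
    (LS (shuffles w1 w2) fun a => LS (shuffles m1 m2) fun b => LS (shuffles t1 t2) fun c =>
       phiM A B (a, b, c) - phiN A B (a, b, c))
    = (if m2 = [] then (LS (shuffles w1 w2) fun a => LS (shuffles t1 t2) fun c =>
         phiM A B (a, m1, c) - phiN A B (a, m1, c)) else 0)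
      + (if m1 = [] then (LS (shuffles w1 w2) fun a => LS (shuffles t1 t2) fun c =>
         phiM A B (a, m2, c) - phiN A B (a, m2, c)) else 0) := by
  cases m1 with
  | nil =>
    cases m2 with
    | nil => simp [phi_zero_mid]
    | cons y m2' => simp
  | cons x m1' =>
    cases m2 with
    | nil => simp
    | cons y m2' =>
      rw [if_neg (cons_ne_nil y m2'), if_neg (cons_ne_nil x m1'), add_zero]
      have haz : ∀ a ∈ shuffles w1 w2,
          (LS (shuffles (x::m1') (y::m2')) fun b => LS (shuffles t1 t2) fun c =>
            phiM A B (a, b, c) - phiN A B (a, b, c)) = 0 := by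
        intro a _
        rw [LS_comm]
        have hcz : ∀ c ∈ shuffles t1 t2,
            (LS (shuffles (x::m1') (y::m2')) fun b =>
              phiM A B (a, b, c) - phiN A B (a, b, c)) = 0 := by
          intro c _
          rw [LS_sub]
          have hMz : (LS (shuffles (x::m1') (y::m2')) fun b => phiM A B (a, b, c)) = 0 := by
            cases c with
            | nil =>
              have : ∀ b ∈ shuffles (x::m1') (y::m2'), phiM A B (a, b, ([]:List K)) = 0 := by
                intro b _; cases b <;> rfl
              rw [LS_congr this, LS_zero]
            | cons c0 c'' =>
              have : ∀ b ∈ shuffles (x::m1') (y::m2'),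
                  phiM A B (a, b, c0::c'') = A (a ++ c0 :: c'') * B (b.map (fun z => z - c0)) := by
                intro b _
                cases b with
                | nil => simp [phiM, hB0]
                | cons b0 b' => rfl
              rw [LS_congr this, LS_mul_left,
                sumB B hB _ _ _ (cons_ne_nil x m1') (cons_ne_nil y m2'), mul_zero]
          have hNz : (LS (shuffles (x::m1') (y::m2')) fun b => phiN A B (a, b, c)) = 0 := by
            cases a with
            | nil =>
              have : ∀ b ∈ shuffles (x::m1') (y::m2'), phiN A B (([]:List K), b, c) = 0 := by
                intro b _; cases b <;> rfl
              rw [LS_congr this, LS_zero]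
            | cons a0 a' =>
              have : ∀ b ∈ shuffles (x::m1') (y::m2'),
                  phiN A B (a0::a', b, c)
                    = A ((a0::a') ++ c) * B (b.map (fun z => z - (a0::a').getLastD 0)) := by
                intro b _
                cases b with
                | nil => simp [phiN, hB0]
                | cons b0 b' => rfl
              rw [LS_congr this, LS_mul_left,
                sumB B hB _ _ _ (cons_ne_nil x m1') (cons_ne_nil y m2'), mul_zero]
          rw [hMz, hNz, sub_zero]
        rw [LS_congr hcz, LS_zero]
      rw [LS_congr haz, LS_zero]


/-- if `A` and `B` are alternal moulds in ARI-bar (v-variables),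
then `arit(B)·A` is alternal. -/
theorem aritV_alternal (A B : List K → K) (hA0 : A [] = 0) (hB0 : B [] = 0)
    (hA : Alternal A) (hB : Alternal B) : Alternal (aritV B A) := by
  classical
  intro u v hu hv
  show LS (shuffles u v) (aritV B A) = 0
  have hphi : ∀ w ∈ shuffles u v, aritV B A w
      = LS (splits2 w) (fun p => LS (splits2 p.2) fun q =>
          phiM A B (p.1, q.1, q.2) - phiN A B (p.1, q.1, q.2)) := by
    intro w _
    have h1 : aritV B A w = LS (splits3 w) (fun t => phiM A B t - phiN A B t) := by
      show LS (splits3 w) (phiM A B) - LS (splits3 w) (phiN A B) = _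
      exact (LS_sub _ _ _).symm
    rw [h1, LS_splits3]
  have hS1 : (LS (splits2 u) (fun p => LS (splits2 v) fun q => LS (splits2 p.2) fun p' =>
          LS (splits2 q.2) fun q' =>
            if q'.1 = [] then (LS (shuffles p.1 q.1) fun a => LS (shuffles p'.2 q'.2) fun c =>
               phiM A B (a, p'.1, c) - phiN A B (a, p'.1, c)) else 0)) = 0 := by
    calc (LS (splits2 u) (fun p => LS (splits2 v) fun q => LS (splits2 p.2) fun p' =>
          LS (splits2 q.2) fun q' =>
            if q'.1 = [] then (LS (shuffles p.1 q.1) fun a => LS (shuffles p'.2 q'.2) fun c =>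
               phiM A B (a, p'.1, c) - phiN A B (a, p'.1, c)) else 0))
        = LS (splits2 u) (fun p => LS (splits2 v) fun q => LS (splits2 p.2) fun p' =>
            LS (shuffles p.1 q.1) fun a => LS (shuffles p'.2 q.2) fun c =>
               phiM A B (a, p'.1, c) - phiN A B (a, p'.1, c)) := by
          apply LS_congr; intro p _
          apply LS_congr; intro q _
          apply LS_congr; intro p' _
          exact LS_splits2_first_nil q.2 (fun r => LS (shuffles p.1 q.1) fun a =>
            LS (shuffles p'.2 r) fun c => phiM A B (a, p'.1, c) - phiN A B (a, p'.1, c))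
      _ = LS (splits2 u) (fun p => LS (splits2 p.2) fun p' => LS (splits2 v) fun q =>
            LS (shuffles p.1 q.1) fun a => LS (shuffles p'.2 q.2) fun c =>
               phiM A B (a, p'.1, c) - phiN A B (a, p'.1, c)) := by
          apply LS_congr; intro p _
          exact LS_comm _ _ _
      _ = 0 := by
          refine (LS_congr ?_).trans (LS_zero _)
          intro p _
          refine (LS_congr ?_).trans (LS_zero _)
          intro p' _
          exact S0 A B hA p'.1 p.1 p'.2 v hv
  have hS2 : (LS (splits2 u) (fun p => LS (splits2 v) fun q => LS (splits2 p.2) fun p' =>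
          LS (splits2 q.2) fun q' =>
            if p'.1 = [] then (LS (shuffles p.1 q.1) fun a => LS (shuffles p'.2 q'.2) fun c =>
               phiM A B (a, q'.1, c) - phiN A B (a, q'.1, c)) else 0)) = 0 := by
    calc (LS (splits2 u) (fun p => LS (splits2 v) fun q => LS (splits2 p.2) fun p' =>
          LS (splits2 q.2) fun q' =>
            if p'.1 = [] then (LS (shuffles p.1 q.1) fun a => LS (shuffles p'.2 q'.2) fun c =>
               phiM A B (a, q'.1, c) - phiN A B (a, q'.1, c)) else 0))
        = LS (splits2 u) (fun p => LS (splits2 v) fun q => LS (splits2 p.2) fun p' =>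
            if p'.1 = [] then (LS (splits2 q.2) fun q' => LS (shuffles p.1 q.1) fun a =>
              LS (shuffles p'.2 q'.2) fun c =>
                phiM A B (a, q'.1, c) - phiN A B (a, q'.1, c)) else 0) := by
          apply LS_congr; intro p _
          apply LS_congr; intro q _
          apply LS_congr; intro p' _
          exact LS_ite (splits2 q.2) _
      _ = LS (splits2 u) (fun p => LS (splits2 v) fun q =>
            LS (splits2 q.2) fun q' => LS (shuffles p.1 q.1) fun a =>
              LS (shuffles p.2 q'.2) fun c =>
                phiM A B (a, q'.1, c) - phiN A B (a, q'.1, c)) := by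
          apply LS_congr; intro p _
          apply LS_congr; intro q _
          exact LS_splits2_first_nil p.2 (fun r => LS (splits2 q.2) fun q' =>
            LS (shuffles p.1 q.1) fun a => LS (shuffles r q'.2) fun c =>
              phiM A B (a, q'.1, c) - phiN A B (a, q'.1, c))
      _ = LS (splits2 v) (fun q => LS (splits2 u) fun p =>
            LS (splits2 q.2) fun q' => LS (shuffles p.1 q.1) fun a =>
              LS (shuffles p.2 q'.2) fun c =>
                phiM A B (a, q'.1, c) - phiN A B (a, q'.1, c)) := LS_comm _ _ _
      _ = LS (splits2 v) (fun q => LS (splits2 q.2) fun q' => LS (splits2 u) fun p =>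
            LS (shuffles p.1 q.1) fun a => LS (shuffles p.2 q'.2) fun c =>
              phiM A B (a, q'.1, c) - phiN A B (a, q'.1, c)) := by
          apply LS_congr; intro q _
          exact LS_comm _ _ _
      _ = LS (splits2 v) (fun q => LS (splits2 q.2) fun q' => LS (splits2 u) fun p =>
            LS (shuffles q.1 p.1) fun a => LS (shuffles q'.2 p.2) fun c =>
              phiM A B (a, q'.1, c) - phiN A B (a, q'.1, c)) := by
          apply LS_congr; intro q _
          apply LS_congr; intro q' _
          apply LS_congr; intro p _
          rw [LS_shuffles_comm]
          apply LS_congr; intro a _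
          rw [LS_shuffles_comm]
      _ = 0 := by
          refine (LS_congr ?_).trans (LS_zero _)
          intro q _
          refine (LS_congr ?_).trans (LS_zero _)
          intro q' _
          exact S0 A B hA q'.1 q.1 q'.2 u hu
  calc LS (shuffles u v) (aritV B A)
      = LS (shuffles u v) (fun w => LS (splits2 w) (fun p => LS (splits2 p.2) fun q =>
          phiM A B (p.1, q.1, q.2) - phiN A B (p.1, q.1, q.2))) := LS_congr hphi
    _ = LS (splits2 u) (fun p => LS (splits2 v) fun q => LS (shuffles p.1 q.1) fun a =>
          LS (shuffles p.2 q.2) fun r => LS (splits2 r) fun q' =>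
            phiM A B (a, q'.1, q'.2) - phiN A B (a, q'.1, q'.2)) :=
        key1 u v (fun a r => LS (splits2 r) fun q' =>
          phiM A B (a, q'.1, q'.2) - phiN A B (a, q'.1, q'.2))
    _ = LS (splits2 u) (fun p => LS (splits2 v) fun q => LS (shuffles p.1 q.1) fun a =>
          LS (splits2 p.2) fun p' => LS (splits2 q.2) fun q' =>
            LS (shuffles p'.1 q'.1) fun b => LS (shuffles p'.2 q'.2) fun c =>
              phiM A B (a, b, c) - phiN A B (a, b, c)) := by
        apply LS_congr; intro p _
        apply LS_congr; intro q _
        apply LS_congr; intro a _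
        exact key1 p.2 q.2 (fun b c => phiM A B (a, b, c) - phiN A B (a, b, c))
    _ = LS (splits2 u) (fun p => LS (splits2 v) fun q => LS (splits2 p.2) fun p' =>
          LS (shuffles p.1 q.1) fun a => LS (splits2 q.2) fun q' =>
            LS (shuffles p'.1 q'.1) fun b => LS (shuffles p'.2 q'.2) fun c =>
              phiM A B (a, b, c) - phiN A B (a, b, c)) := by
        apply LS_congr; intro p _
        apply LS_congr; intro q _
        exact LS_comm _ _ _
    _ = LS (splits2 u) (fun p => LS (splits2 v) fun q => LS (splits2 p.2) fun p' =>
          LS (splits2 q.2) fun q' => LS (shuffles p.1 q.1) fun a =>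
            LS (shuffles p'.1 q'.1) fun b => LS (shuffles p'.2 q'.2) fun c =>
              phiM A B (a, b, c) - phiN A B (a, b, c)) := by
        apply LS_congr; intro p _
        apply LS_congr; intro q _
        apply LS_congr; intro p' _
        exact LS_comm _ _ _
    _ = LS (splits2 u) (fun p => LS (splits2 v) fun q => LS (splits2 p.2) fun p' =>
          LS (splits2 q.2) fun q' =>
            (if q'.1 = [] then (LS (shuffles p.1 q.1) fun a => LS (shuffles p'.2 q'.2) fun c =>
               phiM A B (a, p'.1, c) - phiN A B (a, p'.1, c)) else 0)
            + (if p'.1 = [] then (LS (shuffles p.1 q.1) fun a => LS (shuffles p'.2 q'.2) fun c =>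
               phiM A B (a, q'.1, c) - phiN A B (a, q'.1, c)) else 0)) := by
        apply LS_congr; intro p _
        apply LS_congr; intro q _
        apply LS_congr; intro p' _
        apply LS_congr; intro q' _
        exact gate A B hB hB0 p.1 q.1 p'.1 q'.1 p'.2 q'.2
    _ = (LS (splits2 u) (fun p => LS (splits2 v) fun q => LS (splits2 p.2) fun p' =>
          LS (splits2 q.2) fun q' =>
            if q'.1 = [] then (LS (shuffles p.1 q.1) fun a => LS (shuffles p'.2 q'.2) fun c =>
               phiM A B (a, p'.1, c) - phiN A B (a, p'.1, c)) else 0))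
        + (LS (splits2 u) (fun p => LS (splits2 v) fun q => LS (splits2 p.2) fun p' =>
          LS (splits2 q.2) fun q' =>
            if p'.1 = [] then (LS (shuffles p.1 q.1) fun a => LS (shuffles p'.2 q'.2) fun c =>
               phiM A B (a, q'.1, c) - phiN A B (a, q'.1, c)) else 0)) := by
        simp only [LS_add]
    _ = 0 := by rw [hS1, hS2, add_zero]
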